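/- Let K random variables X_1,...,X_K and Z be such that the joint distribution of (X_1,...,X_K,Z) is invariant under permutations of the indices 1,...,K. Then for any nested subsets A ⊆ B ⊆ {1,...,K}, (1/|A|)·H(X_A | Z, X_{K∖A}) ≤ (1/|B|)·H(X_B | Z, X_{K∖B}), where X_S denotes the tuple of variables indexed by S. -/

import Mathlib

open Finset
open scoped Classical BigOperators

/-- Probability mass function of the random variable `X` under the (finite) measure `μ`. -/
noncomputable def distOf {Ω α : Type*} [Fintype Ω] (μ : Ω → ℝ) (X : Ω → α) (a : α) : ℝ :=
  ∑ ω, if X ω = a then μ ω else 0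

/-- Shannon entropy (natural log) of a finite-valued random variable. -/
noncomputable def ent {Ω α : Type*} [Fintype Ω] [Fintype α] (μ : Ω → ℝ) (X : Ω → α) : ℝ :=
  ∑ a, Real.negMulLog (distOf μ X a)

/-- Conditional Shannon entropy `H(X | Z)`. -/
noncomputable def condEnt {Ω α γ : Type*} [Fintype Ω] [Fintype α] [Fintype γ]
    (μ : Ω → ℝ) (X : Ω → α) (Z : Ω → γ) : ℝ :=
  ent μ (fun ω => (X ω, Z ω)) - ent μ Z

/-- The tuple of random variables indexed by the finite set `A`. -/
def restr {Ω ι α : Type*} (X : ι → Ω → α) (A : Finset ι) : Ω → (A → α) :=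
  fun ω i => X i ω

section Basic
variable {Ω : Type*} [Fintype Ω] (μ : Ω → ℝ)

lemma distOf_nonneg (hμ0 : ∀ ω, 0 ≤ μ ω) {α : Type*} (X : Ω → α) (a : α) :
    0 ≤ distOf μ X a :=
  Finset.sum_nonneg fun ω _ => by split <;> simp [hμ0 ω]

lemma sum_distOf {α : Type*} [Fintype α] (X : Ω → α) (hμ1 : ∑ ω, μ ω = 1) :
    ∑ a, distOf μ X a = 1 := by
  unfold distOf
  rw [Finset.sum_comm]
  simp only [Finset.sum_ite_eq, Finset.mem_univ, if_true]
  exact hμ1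

lemma distOf_comp {α β : Type*} [Fintype α] (X : Ω → α) (h : α → β) (b : β) :
    distOf μ (fun ω => h (X ω)) b = ∑ a, if h a = b then distOf μ X a else 0 := by
  unfold distOf
  have step : ∀ a : α, (if h a = b then ∑ ω, (if X ω = a then μ ω else 0) else 0)
      = ∑ ω, if h a = b then (if X ω = a then μ ω else 0) else 0 := by
    intro a; split <;> simp
  simp only [step]
  rw [Finset.sum_comm]
  refine Finset.sum_congr rfl fun ω _ => ?_
  by_cases hb : h (X ω) = b
  · rw [Finset.sum_eq_single (X ω)]
    · simp [hb]
    · intro a _ ha; simp [Ne.symm ha]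
    · simp
  · rw [Finset.sum_eq_zero]
    · simp [hb]
    · intro a _
      by_cases hxa : X ω = a
      · simp [← hxa, hb]
      · simp [Ne.symm hxa]
        intro _ h; exact absurd h hxa

lemma ent_comp_congr {α β : Type*} [Fintype α] [Fintype β] (X Y : Ω → α) (h : α → β)
    (hd : ∀ a, distOf μ X a = distOf μ Y a) :
    ent μ (fun ω => h (X ω)) = ent μ (fun ω => h (Y ω)) := by
  unfold ent
  refine Finset.sum_congr rfl fun b _ => ?_
  rw [distOf_comp, distOf_comp]
  simp [hd]

lemma ent_comp_injective {α β : Type*} [Fintype α] [Fintype β] (X : Ω → α) (h : α → β)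
    (hh : Function.Injective h) :
    ent μ (fun ω => h (X ω)) = ent μ X := by
  unfold ent
  rw [← Finset.sum_subset (Finset.subset_univ (Finset.image h Finset.univ))]
  · rw [Finset.sum_image (fun a _ a' _ hab => hh hab)]
    refine Finset.sum_congr rfl fun a _ => ?_
    congr 1
    unfold distOf
    refine Finset.sum_congr rfl fun ω _ => ?_
    simp [hh.eq_iff]
  · intro b _ hb
    have : distOf μ (fun ω => h (X ω)) b = 0 := by
      unfold distOf
      refine Finset.sum_eq_zero fun ω _ => ?_
      have : h (X ω) ≠ b := fun hc => hb (by simpa [← hc] using Finset.mem_image_of_mem h (Finset.mem_univ (X ω)))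
      simp [this]
    simp [this]

lemma ent_comp_injective' {α β : Type*} [Fintype α] [Fintype β] (X : Ω → α) (h : α → β)
    (hh : Function.Injective h) (Y : Ω → β) (hY : ∀ ω, Y ω = h (X ω)) :
    ent μ Y = ent μ X := by
  rw [show Y = fun ω => h (X ω) from funext hY]
  exact ent_comp_injective μ X h hh

end Basic

section Key
open Real

lemma triple_comm' {A B C M : Type*} [Fintype A] [Fintype B] [Fintype C] [AddCommMonoid M]
    (f : A → B → C → M) :
    ∑ a, ∑ b, ∑ c, f a b c = ∑ b, ∑ c, ∑ a, f a b c := by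
  rw [show (∑ a, ∑ b, ∑ c, f a b c) = ∑ b, ∑ a, ∑ c, f a b c from Finset.sum_comm]
  exact Finset.sum_congr rfl fun b _ => Finset.sum_comm

lemma triple_comm {A B C M : Type*} [Fintype A] [Fintype B] [Fintype C] [AddCommMonoid M]
    (f : A → B → C → M) :
    ∑ a, ∑ b, ∑ c, f a b c = ∑ c, ∑ a, ∑ b, f a b c := by
  rw [show (∑ a, ∑ b, ∑ c, f a b c) = ∑ a, ∑ c, ∑ b, f a b c from
    Finset.sum_congr rfl fun a _ => Finset.sum_comm]
  exact Finset.sum_comm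

lemma key_ineq {A B C : Type*} [Fintype A] [Fintype B] [Fintype C] (p : A → B → C → ℝ)
    (hp : ∀ a b c, 0 ≤ p a b c) (hs : ∑ a, ∑ b, ∑ c, p a b c = 1) :
    (∑ a, ∑ b, ∑ c, Real.negMulLog (p a b c)) + (∑ c, Real.negMulLog (∑ a, ∑ b, p a b c))
      ≤ (∑ a, ∑ c, Real.negMulLog (∑ b, p a b c))
        + (∑ b, ∑ c, Real.negMulLog (∑ a, p a b c)) := by
  set p13 : A → C → ℝ := fun a c => ∑ b, p a b c with hp13
  set p23 : B → C → ℝ := fun b c => ∑ a, p a b c with hp23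
  set p3 : C → ℝ := fun c => ∑ a, ∑ b, p a b c with hp3
  have hp13n : ∀ a c, 0 ≤ p13 a c := fun a c => Finset.sum_nonneg fun b _ => hp a b c
  have hp23n : ∀ b c, 0 ≤ p23 b c := fun b c => Finset.sum_nonneg fun a _ => hp a b c
  have hp3n : ∀ c, 0 ≤ p3 c := fun c => Finset.sum_nonneg fun a _ => hp13n a c
  have hle13 : ∀ a b c, p a b c ≤ p13 a c := fun a b c =>
    Finset.single_le_sum (fun b _ => hp a b c) (Finset.mem_univ b)
  have hle23 : ∀ a b c, p a b c ≤ p23 b c := fun a b c =>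
    Finset.single_le_sum (fun a _ => hp a b c) (Finset.mem_univ a)
  have hle3 : ∀ a b c, p a b c ≤ p3 c := fun a b c =>
    (hle13 a b c).trans (Finset.single_le_sum (fun a _ => hp13n a c) (Finset.mem_univ a))
  have hsum23 : ∀ c, ∑ b, p23 b c = p3 c := fun c => Finset.sum_comm
  have hsumc3 : ∑ c, p3 c = 1 := by rw [← hs]; exact (triple_comm p).symm
  -- the per-term inequality
  have hterm : ∀ a b c,
      p a b c * (Real.log (p13 a c) + Real.log (p23 b c) - Real.log (p a b c) - Real.log (p3 c))
        ≤ (if 0 < p a b c then p13 a c * p23 b c / p3 c - p a b c else 0) := by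
    intro a b c
    by_cases h0 : 0 < p a b c
    · have h13 : 0 < p13 a c := lt_of_lt_of_le h0 (hle13 a b c)
      have h23 : 0 < p23 b c := lt_of_lt_of_le h0 (hle23 a b c)
      have h3 : 0 < p3 c := lt_of_lt_of_le h0 (hle3 a b c)
      have ht : 0 < p13 a c * p23 b c / (p a b c * p3 c) := by positivity
      have hlog : Real.log (p13 a c) + Real.log (p23 b c) - Real.log (p a b c) - Real.log (p3 c)
          = Real.log (p13 a c * p23 b c / (p a b c * p3 c)) := by
        rw [Real.log_div (by positivity) (by positivity), Real.log_mul h13.ne' h23.ne',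
          Real.log_mul h0.ne' h3.ne']
        ring
      rw [hlog, if_pos h0]
      have h2 := mul_le_mul_of_nonneg_left (Real.log_le_sub_one_of_pos ht) h0.le
      calc p a b c * Real.log (p13 a c * p23 b c / (p a b c * p3 c))
          ≤ p a b c * (p13 a c * p23 b c / (p a b c * p3 c) - 1) := h2
        _ = p13 a c * p23 b c / p3 c - p a b c := by
            field_simp
    · have hz : p a b c = 0 := le_antisymm (not_lt.mp h0) (hp a b c)
      simp [hz]
  -- sum of the RHS bound is ≤ 0
  have hsum_bound : ∑ a, ∑ b, ∑ c,
      (if 0 < p a b c then p13 a c * p23 b c / p3 c - p a b c else 0) ≤ 0 := by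
    have split : ∀ a b c, (if 0 < p a b c then p13 a c * p23 b c / p3 c - p a b c else 0)
        = (if 0 < p a b c then p13 a c * p23 b c / p3 c else 0) - p a b c := by
      intro a b c
      by_cases h0 : 0 < p a b c
      · simp [h0]
      · have hz : p a b c = 0 := le_antisymm (not_lt.mp h0) (hp a b c)
        simp [h0, hz]
    simp only [split, Finset.sum_sub_distrib]
    rw [hs]
    have h1 : ∑ a, ∑ b, ∑ c, (if 0 < p a b c then p13 a c * p23 b c / p3 c else 0) ≤ 1 := by
      have hb : ∀ a b c, (if 0 < p a b c then p13 a c * p23 b c / p3 c else 0)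
          ≤ (if 0 < p3 c then p13 a c * p23 b c / p3 c else 0) := by
        intro a b c
        by_cases h0 : 0 < p a b c
        · rw [if_pos h0, if_pos (lt_of_lt_of_le h0 (hle3 a b c))]
        · rw [if_neg h0]
          split
          · exact div_nonneg (mul_nonneg (hp13n a c) (hp23n b c)) (hp3n c)
          · exact le_refl 0
      calc ∑ a, ∑ b, ∑ c, (if 0 < p a b c then p13 a c * p23 b c / p3 c else 0)
          ≤ ∑ a, ∑ b, ∑ c, (if 0 < p3 c then p13 a c * p23 b c / p3 c else 0) :=
            Finset.sum_le_sum fun a _ => Finset.sum_le_sum fun b _ =>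
              Finset.sum_le_sum fun c _ => hb a b c
        _ = ∑ c, ∑ a, ∑ b, (if 0 < p3 c then p13 a c * p23 b c / p3 c else 0) := triple_comm _
        _ = ∑ c, p3 c := by
            refine Finset.sum_congr rfl fun c _ => ?_
            by_cases hc : 0 < p3 c
            · simp only [hc, if_true]
              have : ∀ a, ∑ b, p13 a c * p23 b c / p3 c = p13 a c := by
                intro a
                rw [show (∑ b, p13 a c * p23 b c / p3 c) = p13 a c * (∑ b, p23 b c) / p3 c from ?_]
                · rw [hsum23 c, mul_div_assoc, div_self hc.ne', mul_one]
                · rw [Finset.mul_sum, Finset.sum_div]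
              simp only [this]
              rfl
            · have hz : p3 c = 0 := le_antisymm (not_lt.mp hc) (hp3n c)
              simp [hc, hz]
        _ = 1 := hsumc3
    linarith
  -- combine
  have main_le : ∑ a, ∑ b, ∑ c,
      p a b c * (Real.log (p13 a c) + Real.log (p23 b c) - Real.log (p a b c) - Real.log (p3 c))
        ≤ 0 :=
    le_trans (Finset.sum_le_sum fun a _ => Finset.sum_le_sum fun b _ =>
      Finset.sum_le_sum fun c _ => hterm a b c) hsum_bound
  have e123 : ∑ a, ∑ b, ∑ c, Real.negMulLog (p a b c)
      = ∑ a, ∑ b, ∑ c, (-(p a b c) * Real.log (p a b c)) := by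
    simp [Real.negMulLog]
  have e3 : ∑ c, Real.negMulLog (p3 c)
      = ∑ a, ∑ b, ∑ c, (-(p a b c) * Real.log (p3 c)) := by
    rw [triple_comm (fun a b c => -(p a b c) * Real.log (p3 c))]
    refine Finset.sum_congr rfl fun c _ => ?_
    rw [Real.negMulLog]
    rw [show (∑ a, ∑ b, -p a b c * Real.log (p3 c))
        = (∑ a, ∑ b, -p a b c) * Real.log (p3 c) from by
      rw [Finset.sum_mul]
      exact Finset.sum_congr rfl fun a _ => (Finset.sum_mul _ _ _).symm]
    have : (∑ a, ∑ b, -p a b c) = -p3 c := by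
      simp [hp3, Finset.sum_neg_distrib]
    rw [this]
  have e13 : ∑ a, ∑ c, Real.negMulLog (p13 a c)
      = ∑ a, ∑ b, ∑ c, (-(p a b c) * Real.log (p13 a c)) := by
    refine Finset.sum_congr rfl fun a _ => ?_
    refine Eq.trans ?_ Finset.sum_comm
    refine Finset.sum_congr rfl fun c _ => ?_
    rw [Real.negMulLog, ← Finset.sum_mul]
    have : (∑ b, -p a b c) = -p13 a c := by
      simp [hp13, Finset.sum_neg_distrib]
    rw [this]
  have e23 : ∑ b, ∑ c, Real.negMulLog (p23 b c)
      = ∑ a, ∑ b, ∑ c, (-(p a b c) * Real.log (p23 b c)) := by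
    rw [triple_comm' (fun a b c => -(p a b c) * Real.log (p23 b c))]
    refine Finset.sum_congr rfl fun b _ => Finset.sum_congr rfl fun c _ => ?_
    rw [Real.negMulLog, ← Finset.sum_mul]
    have : (∑ a, -p a b c) = -p23 b c := by
      simp [hp23, Finset.sum_neg_distrib]
    rw [this]
  have combined : (∑ a, ∑ b, ∑ c, (-(p a b c) * Real.log (p13 a c)))
      + (∑ a, ∑ b, ∑ c, (-(p a b c) * Real.log (p23 b c)))
      - (∑ a, ∑ b, ∑ c, (-(p a b c) * Real.log (p a b c)))
      - (∑ a, ∑ b, ∑ c, (-(p a b c) * Real.log (p3 c)))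
      = -(∑ a, ∑ b, ∑ c, p a b c * (Real.log (p13 a c) + Real.log (p23 b c)
          - Real.log (p a b c) - Real.log (p3 c))) := by
    simp only [← Finset.sum_add_distrib, ← Finset.sum_sub_distrib, ← Finset.sum_neg_distrib]
    refine Finset.sum_congr rfl fun a _ => Finset.sum_congr rfl fun b _ =>
      Finset.sum_congr rfl fun c _ => ?_
    ring
  rw [e123, e3, e13, e23]
  linarith

end Key

section Submod
variable {Ω : Type*} [Fintype Ω] (μ : Ω → ℝ)

lemma ent_prod3 {A B C : Type*} [Fintype A] [Fintype B] [Fintype C] (W : Ω → A × B × C) :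
    ent μ W = ∑ a, ∑ b, ∑ c, Real.negMulLog (distOf μ W (a, b, c)) := by
  unfold ent
  rw [Fintype.sum_prod_type]
  exact Finset.sum_congr rfl fun a _ => Fintype.sum_prod_type _

lemma ent_prod2 {A B : Type*} [Fintype A] [Fintype B] (W : Ω → A × B) :
    ent μ W = ∑ a, ∑ b, Real.negMulLog (distOf μ W (a, b)) := by
  unfold ent
  exact Fintype.sum_prod_type _

lemma distOf_fst_pair {A C : Type*} [Fintype A] [Fintype C] (U : Ω → A) (W : Ω → C) (a : A) (c : C)
    {B : Type*} [Fintype B] (V : Ω → B) :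
    distOf μ (fun ω => (U ω, W ω)) (a, c) = ∑ b, distOf μ (fun ω => (U ω, V ω, W ω)) (a, b, c) := by
  unfold distOf
  rw [Finset.sum_comm]
  refine Finset.sum_congr rfl fun ω _ => ?_
  by_cases h1 : U ω = a
  · by_cases h2 : W ω = c
    · rw [if_pos (by simp [h1, h2, Prod.ext_iff])]
      rw [Finset.sum_eq_single (V ω)]
      · rw [if_pos (by simp [h1, h2, Prod.ext_iff])]
      · intro b _ hb
        rw [if_neg (by simp [Prod.ext_iff]; intro _ h; exact absurd h hb.symm)]
      · simp
    · rw [if_neg (by simp [Prod.ext_iff, h2])]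
      exact (Finset.sum_eq_zero fun b _ => by
        rw [if_neg (by simp [Prod.ext_iff, h2])]).symm
  · rw [if_neg (by simp [Prod.ext_iff, h1])]
    exact (Finset.sum_eq_zero fun b _ => by
      rw [if_neg (by simp [Prod.ext_iff, h1])]).symm

lemma distOf_snd_pair {B C : Type*} [Fintype B] [Fintype C] (V : Ω → B) (W : Ω → C) (b : B) (c : C)
    {A : Type*} [Fintype A] (U : Ω → A) :
    distOf μ (fun ω => (V ω, W ω)) (b, c) = ∑ a, distOf μ (fun ω => (U ω, V ω, W ω)) (a, b, c) := by
  unfold distOf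
  rw [Finset.sum_comm]
  refine Finset.sum_congr rfl fun ω _ => ?_
  by_cases h1 : V ω = b
  · by_cases h2 : W ω = c
    · rw [if_pos (by simp [h1, h2, Prod.ext_iff])]
      rw [Finset.sum_eq_single (U ω)]
      · rw [if_pos (by simp [h1, h2, Prod.ext_iff])]
      · intro a _ ha
        rw [if_neg (by simp [Prod.ext_iff]; intro h; exact absurd h ha.symm)]
      · simp
    · rw [if_neg (by simp [Prod.ext_iff, h2])]
      exact (Finset.sum_eq_zero fun a _ => by
        rw [if_neg (by simp [Prod.ext_iff, h2])]).symm
  · rw [if_neg (by simp [Prod.ext_iff, h1])]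
    exact (Finset.sum_eq_zero fun a _ => by
      rw [if_neg (by simp [Prod.ext_iff, h1])]).symm

lemma distOf_third {C : Type*} [Fintype C] (W : Ω → C) (c : C)
    {A B : Type*} [Fintype A] [Fintype B] (U : Ω → A) (V : Ω → B) :
    distOf μ W c = ∑ a, ∑ b, distOf μ (fun ω => (U ω, V ω, W ω)) (a, b, c) := by
  have h1 : ∀ a, distOf μ (fun ω => (U ω, W ω)) (a, c)
      = ∑ b, distOf μ (fun ω => (U ω, V ω, W ω)) (a, b, c) := fun a =>
    distOf_fst_pair μ U W a c V
  rw [show (∑ a, ∑ b, distOf μ (fun ω => (U ω, V ω, W ω)) (a, b, c))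
      = ∑ a, distOf μ (fun ω => (U ω, W ω)) (a, c) from
    (Finset.sum_congr rfl fun a _ => (h1 a).symm)]
  unfold distOf
  rw [Finset.sum_comm]
  refine Finset.sum_congr rfl fun ω _ => ?_
  by_cases h2 : W ω = c
  · rw [if_pos h2]
    rw [Finset.sum_eq_single (U ω)]
    · rw [if_pos (by simp [h2])]
    · intro a _ ha
      rw [if_neg (by simp [Prod.ext_iff]; intro h; exact absurd h ha.symm)]
    · simp
  · rw [if_neg h2]
    exact (Finset.sum_eq_zero fun a _ => by
      rw [if_neg (by simp [Prod.ext_iff, h2])]).symm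

lemma ent_submodular {A B C : Type*} [Fintype A] [Fintype B] [Fintype C]
    (hμ0 : ∀ ω, 0 ≤ μ ω) (hμ1 : ∑ ω, μ ω = 1)
    (U : Ω → A) (V : Ω → B) (W : Ω → C) :
    ent μ (fun ω => (U ω, V ω, W ω)) + ent μ W
      ≤ ent μ (fun ω => (U ω, W ω)) + ent μ (fun ω => (V ω, W ω)) := by
  set p : A → B → C → ℝ := fun a b c => distOf μ (fun ω => (U ω, V ω, W ω)) (a, b, c) with hpdef
  have hp : ∀ a b c, 0 ≤ p a b c := fun a b c => distOf_nonneg μ hμ0 _ _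
  have hs : ∑ a, ∑ b, ∑ c, p a b c = 1 := by
    have := sum_distOf μ (fun ω => (U ω, V ω, W ω)) hμ1
    rw [← this, Fintype.sum_prod_type]
    refine Finset.sum_congr rfl fun a _ => ?_
    rw [hpdef]
    exact (Fintype.sum_prod_type
      (fun y : B × C => distOf μ (fun ω => (U ω, V ω, W ω)) (a, y))).symm
  have key := key_ineq p hp hs
  rw [ent_prod3 μ (fun ω => (U ω, V ω, W ω)), ent_prod2 μ (fun ω => (U ω, W ω)),
    ent_prod2 μ (fun ω => (V ω, W ω))]
  have e1 : ∀ a c, distOf μ (fun ω => (U ω, W ω)) (a, c) = ∑ b, p a b c := fun a c =>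
    distOf_fst_pair μ U W a c V
  have e2 : ∀ b c, distOf μ (fun ω => (V ω, W ω)) (b, c) = ∑ a, p a b c := fun b c =>
    distOf_snd_pair μ V W b c U
  have e3 : ∀ c, distOf μ W c = ∑ a, ∑ b, p a b c := fun c => distOf_third μ W c U V
  unfold ent
  simp only [e1, e2, e3]
  calc (∑ a, ∑ b, ∑ c, Real.negMulLog (p a b c)) + ∑ c, Real.negMulLog (∑ a, ∑ b, p a b c)
      ≤ _ := key

end Submod

section Comb
variable {Ω α γ : Type*} [Fintype Ω] [Fintype α] [Fintype γ] {K : ℕ}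
    (μ : Ω → ℝ) (X : Fin K → Ω → α) (Z : Ω → γ)

/-- `g T = ent (Z, X_T)` depends only on the cardinality of `T`. -/
lemma g_card (hperm : ∀ (π : Equiv.Perm (Fin K)) (v : Fin K → α) (z : γ),
      distOf μ (fun ω => ((fun i => X (π i) ω), Z ω)) (v, z)
        = distOf μ (fun ω => ((fun i => X i ω), Z ω)) (v, z))
    (T T' : Finset (Fin K)) (hcard : T'.card = T.card) :
    ent μ (fun ω => (Z ω, restr X T ω)) = ent μ (fun ω => (Z ω, restr X T' ω)) := by
  classical
  have hccard : (T'ᶜ : Finset (Fin K)).card = (Tᶜ : Finset (Fin K)).card := by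
    rw [Finset.card_compl, Finset.card_compl, hcard]
  set e : {x // x ∈ T'} ≃ {x // x ∈ T} := Finset.equivOfCardEq hcard with he
  set e' : {x // ¬x ∈ T'} ≃ {x // ¬x ∈ T} :=
    ((Equiv.subtypeEquivRight (fun x => (Finset.mem_compl (s := T')).symm)).trans
      ((Finset.equivOfCardEq hccard).trans
      (Equiv.subtypeEquivRight (fun x => (Finset.mem_compl (s := T)))))) with he'
  set π : Equiv.Perm (Fin K) :=
    ((Equiv.sumCompl (· ∈ T')).symm.trans ((e.sumCongr e').trans
      (Equiv.sumCompl (· ∈ T)))) with hπ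
  have hπval : ∀ (x : Fin K) (hx : x ∈ T'), π x = ↑(e ⟨x, hx⟩) := by
    intro x hx
    simp [hπ, Equiv.sumCompl_symm_apply_of_pos (p := (· ∈ T')) hx]
  -- step 1: relabel T-tuples as T'-tuples via e
  have inj_m : Function.Injective
      (fun q : γ × ({x // x ∈ T} → α) => (q.1, fun j : {x // x ∈ T'} => q.2 (e j))) := by
    intro q q' h
    rw [Prod.ext_iff] at h
    obtain ⟨h1, h2⟩ := h
    refine Prod.ext h1 (funext fun t => ?_)
    have := congrFun h2 (e.symm t)
    simpa using this
  have step1 : ent μ (fun ω => (Z ω, restr X T ω))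
      = ent μ (fun ω => (Z ω, fun j : {x // x ∈ T'} => X (↑(e j)) ω)) :=
    (ent_comp_injective' μ (fun ω => (Z ω, restr X T ω)) _ inj_m _ (fun ω => rfl)).symm
  -- step 2: use permutation invariance
  have hd : ∀ q : (Fin K → α) × γ,
      distOf μ (fun ω => ((fun i => X (π i) ω), Z ω)) q
        = distOf μ (fun ω => ((fun i => X i ω), Z ω)) q := fun ⟨v, z⟩ => hperm π v z
  have step2 : ent μ (fun ω =>
        (fun q : (Fin K → α) × γ => (q.2, fun j : {x // x ∈ T'} => q.1 ↑j))
          ((fun i => X (π i) ω), Z ω))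
      = ent μ (fun ω =>
        (fun q : (Fin K → α) × γ => (q.2, fun j : {x // x ∈ T'} => q.1 ↑j))
          ((fun i => X i ω), Z ω)) :=
    ent_comp_congr μ _ _ (fun q : (Fin K → α) × γ => (q.2, fun j : {x // x ∈ T'} => q.1 ↑j)) hd
  have eqfun : (fun ω => (Z ω, fun j : {x // x ∈ T'} => X (↑(e j)) ω))
      = (fun ω => (Z ω, fun j : {x // x ∈ T'} => X (π ↑j) ω)) := by
    funext ω
    refine Prod.ext rfl (funext fun j => ?_)
    exact (congrArg (fun t => X t ω) (hπval j.1 j.2)).symm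
  rw [step1, eqfun]
  exact step2

/-- submodularity step for `g`. -/
lemma g_submod (hμ0 : ∀ ω, 0 ≤ μ ω) (hμ1 : ∑ ω, μ ω = 1)
    (U : Finset (Fin K)) (i j : Fin K) (hij : i ≠ j) (hi : i ∉ U) (hj : j ∉ U) :
    ent μ (fun ω => (Z ω, restr X (insert i (insert j U)) ω))
      + ent μ (fun ω => (Z ω, restr X U ω))
    ≤ ent μ (fun ω => (Z ω, restr X (insert i U) ω))
      + ent μ (fun ω => (Z ω, restr X (insert j U) ω)) := by
  classical
  have base := ent_submodular μ hμ0 hμ1 (X i) (X j) (fun ω => (Z ω, restr X U ω))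
  have hiV : i ∈ insert i (insert j U) := Finset.mem_insert_self _ _
  have hjV : j ∈ insert i (insert j U) := Finset.mem_insert_of_mem (Finset.mem_insert_self _ _)
  have hUV : ∀ u : {x // x ∈ U}, (u : Fin K) ∈ insert i (insert j U) :=
    fun u => Finset.mem_insert_of_mem (Finset.mem_insert_of_mem u.2)
  -- identify ent (X i, X j, (Z, X_U)) with g (insert i (insert j U))
  have inj1 : Function.Injective
      (fun q : γ × ({x // x ∈ insert i (insert j U)} → α) =>
        (q.2 ⟨i, hiV⟩, q.2 ⟨j, hjV⟩, (q.1, fun u : {x // x ∈ U} => q.2 ⟨u, hUV u⟩))) := by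
    intro q q' h
    simp only [Prod.ext_iff] at h
    obtain ⟨h1, h2, h3, h4⟩ := h
    refine Prod.ext h3 (funext fun t => ?_)
    rcases Finset.mem_insert.mp t.2 with hti | ht
    · have : t = ⟨i, hiV⟩ := Subtype.ext hti
      rw [this]; exact h1
    rcases Finset.mem_insert.mp ht with htj | htU
    · have : t = ⟨j, hjV⟩ := Subtype.ext htj
      rw [this]; exact h2
    · have := congrFun h4 ⟨↑t, htU⟩
      simpa using this
  have e1 : ent μ (fun ω => (X i ω, X j ω, (Z ω, restr X U ω)))
      = ent μ (fun ω => (Z ω, restr X (insert i (insert j U)) ω)) :=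
    (ent_comp_injective' μ (fun ω => (Z ω, restr X (insert i (insert j U)) ω)) _ inj1 _
      (fun ω => rfl))
  have inj2 : Function.Injective
      (fun q : γ × ({x // x ∈ insert i U} → α) =>
        (q.2 ⟨i, Finset.mem_insert_self i U⟩,
          (q.1, fun u : {x // x ∈ U} => q.2 ⟨u, Finset.mem_insert_of_mem u.2⟩))) := by
    intro q q' h
    simp only [Prod.ext_iff] at h
    obtain ⟨h1, h3, h4⟩ := h
    refine Prod.ext h3 (funext fun t => ?_)
    rcases Finset.mem_insert.mp t.2 with hti | htU
    · have : t = ⟨i, Finset.mem_insert_self i U⟩ := Subtype.ext hti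
      rw [this]; exact h1
    · have := congrFun h4 ⟨↑t, htU⟩
      simpa using this
  have e2 : ent μ (fun ω => (X i ω, (Z ω, restr X U ω)))
      = ent μ (fun ω => (Z ω, restr X (insert i U) ω)) :=
    (ent_comp_injective' μ (fun ω => (Z ω, restr X (insert i U) ω)) _ inj2 _ (fun ω => rfl))
  have inj3 : Function.Injective
      (fun q : γ × ({x // x ∈ insert j U} → α) =>
        (q.2 ⟨j, Finset.mem_insert_self j U⟩,
          (q.1, fun u : {x // x ∈ U} => q.2 ⟨u, Finset.mem_insert_of_mem u.2⟩))) := by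
    intro q q' h
    simp only [Prod.ext_iff] at h
    obtain ⟨h1, h3, h4⟩ := h
    refine Prod.ext h3 (funext fun t => ?_)
    rcases Finset.mem_insert.mp t.2 with htj | htU
    · have : t = ⟨j, Finset.mem_insert_self j U⟩ := Subtype.ext htj
      rw [this]; exact h1
    · have := congrFun h4 ⟨↑t, htU⟩
      simpa using this
  have e3 : ent μ (fun ω => (X j ω, (Z ω, restr X U ω)))
      = ent μ (fun ω => (Z ω, restr X (insert j U) ω)) :=
    (ent_comp_injective' μ (fun ω => (Z ω, restr X (insert j U) ω)) _ inj3 _ (fun ω => rfl))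
  rw [← e1, ← e2, ← e3]
  exact base

/-- `condEnt` in terms of `g`. -/
lemma condEnt_eq_g (S : Finset (Fin K)) :
    condEnt μ (restr X S) (fun ω => (Z ω, restr X Sᶜ ω))
      = ent μ (fun ω => ((fun i => X i ω), Z ω))
        - ent μ (fun ω => (Z ω, restr X Sᶜ ω)) := by
  classical
  unfold condEnt
  congr 1
  have inj : Function.Injective
      (fun q : (Fin K → α) × γ =>
        ((fun s : {x // x ∈ S} => q.1 ↑s), (q.2, fun s : {x // x ∈ Sᶜ} => q.1 ↑s))) := by
    intro q q' h
    simp only [Prod.ext_iff] at h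
    obtain ⟨h1, h2, h3⟩ := h
    refine Prod.ext (funext fun k => ?_) h2
    by_cases hk : k ∈ S
    · exact congrFun h1 ⟨k, hk⟩
    · exact congrFun h3 ⟨k, Finset.mem_compl.mpr hk⟩
  exact (ent_comp_injective' μ (fun ω => ((fun i => X i ω), Z ω)) _ inj _ (fun ω => rfl))

lemma g_univ :
    ent μ (fun ω => (Z ω, restr X (Finset.univ : Finset (Fin K)) ω))
      = ent μ (fun ω => ((fun i => X i ω), Z ω)) := by
  classical
  have inj : Function.Injective
      (fun q : (Fin K → α) × γ =>
        (q.2, fun s : {x // x ∈ (Finset.univ : Finset (Fin K))} => q.1 ↑s)) := by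
    intro q q' h
    simp only [Prod.ext_iff] at h
    obtain ⟨h1, h2⟩ := h
    exact Prod.ext (funext fun k => congrFun h2 ⟨k, Finset.mem_univ k⟩) h1
  exact ent_comp_injective' μ (fun ω => ((fun i => X i ω), Z ω)) _ inj _ (fun ω => rfl)

end Comb

lemma slope_mono (φ : ℕ → ℝ) (b : ℕ) (hφ0 : φ 0 = 0)
    (hconv : ∀ k, k + 2 ≤ b → φ (k + 1) - φ k ≤ φ (k + 2) - φ (k + 1)) :
    ∀ a, 1 ≤ a → a ≤ b → (b : ℝ) * φ a ≤ (a : ℝ) * φ b := by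
  intro a ha hab
  set d : ℕ → ℝ := fun k => φ (k + 1) - φ k with hd
  have dmono : ∀ j, j + 1 ≤ b → ∀ k, k ≤ j → d k ≤ d j := by
    intro j
    induction j with
    | zero => intro _ k hk; interval_cases k; exact le_refl _
    | succ n ih =>
      intro hjb k hk
      rcases Nat.lt_succ_iff_lt_or_eq.mp (Nat.lt_succ_of_le hk) with h | h
      · exact le_trans (ih (by omega) k (by omega)) (hconv n (by omega))
      · rw [h]
  have tele : ∀ n, φ n = ∑ k ∈ Finset.range n, d k := by
    intro n
    rw [hd, Finset.sum_range_sub, hφ0, sub_zero]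
  have h1 : ∀ j, a ≤ j → j + 1 ≤ b → φ a ≤ (a : ℝ) * d j := by
    intro j hj hjb
    rw [tele a]
    calc ∑ k ∈ Finset.range a, d k
        ≤ ∑ k ∈ Finset.range a, d j :=
          Finset.sum_le_sum fun k hk =>
            dmono j hjb k (le_trans (Nat.le_of_lt_succ (Nat.lt_succ_of_lt (Finset.mem_range.mp hk))) hj)
      _ = (a : ℝ) * d j := by simp [Finset.sum_const, nsmul_eq_mul]
  have hIco : φ b - φ a = ∑ j ∈ Finset.Ico a b, d j := by
    rw [Finset.sum_Ico_eq_sub _ hab, ← tele b, ← tele a]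
  have h2 : ∑ j ∈ Finset.Ico a b, (φ a - (a : ℝ) * d j) ≤ 0 :=
    Finset.sum_nonpos fun j hj => sub_nonpos.mpr
      (h1 j (Finset.mem_Ico.mp hj).1 (Nat.succ_le_of_lt (Finset.mem_Ico.mp hj).2))
  have h3 : ∑ j ∈ Finset.Ico a b, (φ a - (a : ℝ) * d j)
      = ((b - a : ℕ) : ℝ) * φ a - (a : ℝ) * (φ b - φ a) := by
    rw [Finset.sum_sub_distrib, Finset.sum_const, Nat.card_Ico, ← Finset.mul_sum, ← hIco,
      nsmul_eq_mul]
  have hcast : ((b - a : ℕ) : ℝ) = (b : ℝ) - (a : ℝ) := by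
    rw [Nat.cast_sub hab]
  rw [h3, hcast] at h2
  linarith

theorem stmt0 {Ω α γ : Type*} [Fintype Ω] [Fintype α] [Fintype γ] {K : ℕ}
    (μ : Ω → ℝ) (hμ0 : ∀ ω, 0 ≤ μ ω) (hμ1 : ∑ ω, μ ω = 1)
    (X : Fin K → Ω → α) (Z : Ω → γ)
    (hperm : ∀ (π : Equiv.Perm (Fin K)) (v : Fin K → α) (z : γ),
      distOf μ (fun ω => ((fun i => X (π i) ω), Z ω)) (v, z)
        = distOf μ (fun ω => ((fun i => X i ω), Z ω)) (v, z))
    (A B : Finset (Fin K)) (hA : A.Nonempty) (hAB : A ⊆ B) :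
    (1 / (A.card : ℝ)) *
        condEnt μ (restr X A) (fun ω => (Z ω, restr X Aᶜ ω))
      ≤ (1 / (B.card : ℝ)) *
        condEnt μ (restr X B) (fun ω => (Z ω, restr X Bᶜ ω)) := by
  classical
  set E : ℝ := ent μ (fun ω => ((fun i => X i ω), Z ω)) with hE
  set cut : ℕ → Finset (Fin K) := fun m => Finset.univ.filter (fun i : Fin K => (i : ℕ) < m)
    with hcut
  have hcut_card : ∀ m, m ≤ K → (cut m).card = m := by
    intro m hm
    have : cut m = Finset.map ⟨Fin.castLE hm, Fin.castLE_injective hm⟩ Finset.univ := by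
      ext x
      simp only [hcut, Finset.mem_filter, Finset.mem_univ, true_and, Finset.mem_map,
        Function.Embedding.coeFn_mk]
      constructor
      · intro hx
        exact ⟨⟨x, hx⟩, rfl⟩
      · rintro ⟨j, -, rfl⟩
        exact j.isLt
    rw [this, Finset.card_map, Finset.card_univ, Fintype.card_fin]
  have hcutK : cut K = Finset.univ := by
    ext x
    simp [hcut, x.isLt]
  set ψ : ℕ → ℝ := fun m => ent μ (fun ω => (Z ω, restr X (cut m) ω)) with hψ
  have hgcard : ∀ T : Finset (Fin K), ent μ (fun ω => (Z ω, restr X T ω)) = ψ T.card := by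
    intro T
    have hTle : T.card ≤ K := by
      simpa using Finset.card_le_univ T
    exact g_card μ X Z hperm T (cut T.card) (hcut_card _ hTle)
  have hψK : ψ K = E := by
    have h0 : ent μ (fun ω => (Z ω, restr X (Finset.univ : Finset (Fin K)) ω)) = E :=
      g_univ μ X Z
    rw [hψ]
    show ent μ (fun ω => (Z ω, restr X (cut K) ω)) = E
    rw [hcutK]
    exact h0
  have hconc : ∀ m, m + 2 ≤ K → ψ (m + 2) + ψ m ≤ ψ (m + 1) + ψ (m + 1) := by
    intro m hm
    set i : Fin K := ⟨m, by omega⟩ with hi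
    set j : Fin K := ⟨m + 1, by omega⟩ with hj
    have hij : i ≠ j := by
      simp [hi, hj, Fin.ext_iff]
    have hiU : i ∉ cut m := by simp [hcut, hi]
    have hjU : j ∉ cut m := by simp [hcut, hj]
    have c0 : (cut m).card = m := hcut_card m (by omega)
    have ci : (insert i (cut m)).card = m + 1 := by
      rw [Finset.card_insert_of_notMem hiU, c0]
    have cj : (insert j (cut m)).card = m + 1 := by
      rw [Finset.card_insert_of_notMem hjU, c0]
    have hinotin : i ∉ insert j (cut m) := by
      simp [Finset.mem_insert, hij, hiU]
    have cij : (insert i (insert j (cut m))).card = m + 2 := by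
      rw [Finset.card_insert_of_notMem hinotin, cj]
    have key := g_submod μ X Z hμ0 hμ1 (cut m) i j hij hiU hjU
    rw [hgcard (insert i (insert j (cut m))), hgcard (cut m), hgcard (insert i (cut m)),
      hgcard (insert j (cut m)), cij, c0, ci, cj] at key
    exact key
  set φ : ℕ → ℝ := fun k => E - ψ (K - k) with hφ
  have hφ0 : φ 0 = 0 := by simp [hφ, hψK]
  set a := A.card with ha
  set b := B.card with hb
  have hbK : b ≤ K := by simpa [hb] using Finset.card_le_univ B
  have hab : a ≤ b := Finset.card_le_card hAB
  have ha1 : 1 ≤ a := Finset.card_pos.mpr hA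
  have hconv : ∀ k, k + 2 ≤ b → φ (k + 1) - φ k ≤ φ (k + 2) - φ (k + 1) := by
    intro k hk
    have h := hconc (K - k - 2) (by omega)
    have e1 : K - k - 2 + 2 = K - k := by omega
    have e2 : K - k - 2 + 1 = K - (k + 1) := by omega
    have e3 : K - k - 2 = K - (k + 2) := by omega
    rw [e1] at h
    rw [e2] at h
    rw [e3] at h
    simp only [hφ]
    linarith
  have main := slope_mono φ b hφ0 hconv a ha1 hab
  have hAc : (Aᶜ : Finset (Fin K)).card = K - a := by
    rw [Finset.card_compl]
    simp [ha]
  have hBc : (Bᶜ : Finset (Fin K)).card = K - b := by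
    rw [Finset.card_compl]
    simp [hb]
  have hgoalA : condEnt μ (restr X A) (fun ω => (Z ω, restr X Aᶜ ω)) = φ a := by
    rw [condEnt_eq_g μ X Z A, hgcard Aᶜ, hAc, hφ]
  have hgoalB : condEnt μ (restr X B) (fun ω => (Z ω, restr X Bᶜ ω)) = φ b := by
    rw [condEnt_eq_g μ X Z B, hgcard Bᶜ, hBc, hφ]
  rw [hgoalA, hgoalB]
  have ha' : (0 : ℝ) < a := by
    exact_mod_cast Nat.lt_of_lt_of_le Nat.zero_lt_one ha1
  have hb' : (0 : ℝ) < b := by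
    exact_mod_cast Nat.lt_of_lt_of_le Nat.zero_lt_one (le_trans ha1 hab)
  rw [one_div, inv_mul_eq_div, one_div, inv_mul_eq_div, div_le_div_iff₀ ha' hb']
  calc φ a * (b : ℝ) = (b : ℝ) * φ a := mul_comm _ _
    _ ≤ (a : ℝ) * φ b := main
    _ = φ b * (a : ℝ) := mul_comm _ _
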